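/- IPW identification of the ATT: under unconfoundedness and positivity, E[Y(1)-Y(0) | T=1] = (1/P(T=1))·E[(T - (1-T)·e(X)/(1-e(X)))·Y], where e(X) = P(T=1|X). -/

import Mathlib

open MeasureTheory ProbabilityTheory MeasurableSpace Set Filter

section Aux

variable {Ω : Type*} {m mΩ : MeasurableSpace Ω} [StandardBorelSpace Ω]
  {μ : Measure Ω} [IsProbabilityMeasure μ]

lemma condexpKernel_null (hm : m ≤ mΩ) {N : Set Ω} (hN : MeasurableSet N) (hN0 : μ N = 0) :
    ∀ᵐ ω ∂μ, condExpKernel μ m ω N = 0 := by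
  have h1 : (fun ω ↦ (condExpKernel μ m ω N).toReal) =ᵐ[μ] μ⟦N | m⟧ :=
    condExpKernel_ae_eq_condExp hm hN
  have h3 : N.indicator (fun _ => (1:ℝ)) =ᵐ[μ] 0 := by
    have hae : ∀ᵐ x ∂μ, x ∉ N := compl_mem_ae_iff.mpr hN0
    filter_upwards [hae] with x hx
    simp [Set.indicator_of_notMem hx]
  have h2 : μ⟦N | m⟧ =ᵐ[μ] 0 := by
    refine (condExp_congr_ae h3).trans ?_
    rw [condExp_zero]
  filter_upwards [h1, h2] with ω hω1 hω2
  have : (condExpKernel μ m ω N).toReal = 0 := by rw [hω1, hω2]; rfl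
  rcases ENNReal.toReal_eq_zero_iff _ |>.mp this with h | h
  · exact h
  · exact absurd h (measure_ne_top _ _)

/-- Pull-out of conditional independence: `E[g·f | m] = E[g|m] · E[f|m]` a.e. -/
lemma condexp_mul_of_condIndepFun (hm : m ≤ mΩ) {f g : Ω → ℝ}
    (hgm : Measurable g) (hf : Integrable f μ) (hg : Integrable g μ)
    (hfg : Integrable (fun ω => g ω * f ω) μ)
    (hindep : CondIndepFun m hm f g μ) :
    μ[fun ω => g ω * f ω|m] =ᵐ[μ] fun ω => (μ[g|m]) ω * (μ[f|m]) ω := by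
  have hker : Kernel.IndepFun f g (condExpKernel μ m) (μ.trim hm) := hindep
  set κ := condExpKernel μ m with hκ
  obtain ⟨Z, hZsm, hfZ⟩ : ∃ Z, StronglyMeasurable Z ∧ f =ᵐ[μ] Z :=
    ⟨hf.1.mk f, hf.1.stronglyMeasurable_mk, hf.1.ae_eq_mk⟩
  have hZm : Measurable Z := hZsm.measurable
  obtain ⟨N, hsub, hNmeas, hN0⟩ :=
    exists_measurable_superset_of_null (ae_iff.mp hfZ)
  have hκN : ∀ᵐ ω ∂μ, κ ω N = 0 := condexpKernel_null hm hNmeas hN0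
  have hbase : ∀ᵐ ω ∂μ, ∀ q r : ℚ, κ ω (f ⁻¹' Iic (q:ℝ) ∩ g ⁻¹' Iic (r:ℝ))
      = κ ω (f ⁻¹' Iic (q:ℝ)) * κ ω (g ⁻¹' Iic (r:ℝ)) := by
    rw [ae_all_iff]; intro q; rw [ae_all_iff]; intro r
    exact ae_of_ae_trim hm
      (hker.measure_inter_preimage_eq_mul _ _ measurableSet_Iic measurableSet_Iic)
  have hint_f : ∀ᵐ ω ∂μ, Integrable f (κ ω) := hf.condExpKernel_ae
  have hint_g : ∀ᵐ ω ∂μ, Integrable g (κ ω) := hg.condExpKernel_ae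
  have hmain : ∀ᵐ ω ∂μ, ∫ y, g y * f y ∂(κ ω)
      = (∫ y, g y ∂(κ ω)) * ∫ y, f y ∂(κ ω) := by
    filter_upwards [hκN, hbase, hint_f, hint_g] with ω hN0ω hbaseω hintf hintg
    have hfZω : f =ᵐ[κ ω] Z := by
      refine ae_iff.mpr (measure_mono_null ?_ hN0ω)
      exact hsub
    have hsetseq : ∀ A : Set ℝ, f ⁻¹' A =ᵐ[κ ω] Z ⁻¹' A := by
      intro A
      rw [eventuallyEq_set]
      filter_upwards [hfZω] with x hx
      simp [Set.mem_preimage, hx]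
    have hIndepSets : IndepSets (Set.preimage Z '' (⋃ a : ℚ, {Iic (a:ℝ)}))
        (Set.preimage g '' (⋃ a : ℚ, {Iic (a:ℝ)})) (κ ω) := by
      rintro t1 t2 ⟨A, hA, rfl⟩ ⟨B, hB, rfl⟩
      simp only [Set.mem_iUnion, Set.mem_singleton_iff] at hA hB
      obtain ⟨q, rfl⟩ := hA; obtain ⟨r, rfl⟩ := hB
      have h1 : κ ω (Z ⁻¹' Iic (q:ℝ) ∩ g ⁻¹' Iic (r:ℝ))
          = κ ω (f ⁻¹' Iic (q:ℝ) ∩ g ⁻¹' Iic (r:ℝ)) :=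
        measure_congr (((hsetseq _).inter (ae_eq_refl _)).symm)
      have h2 : κ ω (Z ⁻¹' Iic (q:ℝ)) = κ ω (f ⁻¹' Iic (q:ℝ)) :=
        measure_congr (hsetseq _).symm
      refine Filter.Eventually.of_forall fun _ => ?_
      simp only [Kernel.const_apply]
      rw [h1, h2, hbaseω q r]
    have hIndep : IndepFun Z g (κ ω) := by
      have h1le : MeasurableSpace.comap Z inferInstance ≤ mΩ := hZm.comap_le
      have h2le : MeasurableSpace.comap g inferInstance ≤ mΩ := hgm.comap_le
      have hgen : (inferInstance : MeasurableSpace ℝ)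
          = MeasurableSpace.generateFrom (⋃ a : ℚ, {Iic (a:ℝ)}) := by
        rw [(BorelSpace.measurable_eq : (inferInstance : MeasurableSpace ℝ) = borel ℝ),
          Real.borel_eq_generateFrom_Iic_rat]
      have hgen1 : MeasurableSpace.comap Z (inferInstance : MeasurableSpace ℝ)
          = MeasurableSpace.generateFrom (Set.preimage Z '' (⋃ a : ℚ, {Iic (a:ℝ)})) := by
        conv_lhs => rw [hgen]
        rw [MeasurableSpace.comap_generateFrom]
      have hgen2 : MeasurableSpace.comap g (inferInstance : MeasurableSpace ℝ)
          = MeasurableSpace.generateFrom (Set.preimage g '' (⋃ a : ℚ, {Iic (a:ℝ)})) := by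
        conv_lhs => rw [hgen]
        rw [MeasurableSpace.comap_generateFrom]
      exact IndepSets.indep h1le h2le (Real.isPiSystem_Iic_rat.comap _)
        (Real.isPiSystem_Iic_rat.comap _) hgen1 hgen2 hIndepSets
    have hintZ : Integrable Z (κ ω) := (integrable_congr hfZω).mp hintf
    have hmul := ProbabilityTheory.IndepFun.integral_mul_eq_mul_integral (IndepFun.symm hIndep) hintg.1 hintZ.1
    calc ∫ y, g y * f y ∂(κ ω) = ∫ y, g y * Z y ∂(κ ω) :=
          integral_congr_ae (by filter_upwards [hfZω] with x hx; rw [hx])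
      _ = (∫ y, g y ∂(κ ω)) * ∫ y, Z y ∂(κ ω) := hmul
      _ = (∫ y, g y ∂(κ ω)) * ∫ y, f y ∂(κ ω) := by
          rw [integral_congr_ae hfZω.symm]
  filter_upwards [condExp_ae_eq_integral_condExpKernel hm hfg,
    condExp_ae_eq_integral_condExpKernel hm hf,
    condExp_ae_eq_integral_condExpKernel hm hg, hmain] with ω h1 h2 h3 h4
  rw [h1, h2, h3]
  exact h4

end Aux

/-- IPW identification of the ATT: under unconfoundedness and positivity,
`E[Y(1)-Y(0) | T=1] = (1/P(T=1)) · E[(T - (1-T)·e(X)/(1-e(X)))·Y]` with `e(X) = E[T|X]`. -/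
theorem att_ipw_identification
    {Ω α : Type*} [MeasurableSpace Ω] [StandardBorelSpace Ω] [MeasurableSpace α]
    (μ : Measure Ω) [IsProbabilityMeasure μ]
    (X : Ω → α) (T Y0 Y1 Y e : Ω → ℝ)
    (hX : Measurable X) (hT : Measurable T) (hY0 : Integrable Y0 μ) (hY1 : Integrable Y1 μ)
    (hT01 : ∀ ω, T ω = 0 ∨ T ω = 1)
    (hTpos : 0 < μ (T ⁻¹' {1}))
    (hY : Y = fun ω => T ω * Y1 ω + (1 - T ω) * Y0 ω)
    (he : e = condExp (MeasurableSpace.comap X inferInstance) μ T)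
    (hle : MeasurableSpace.comap X inferInstance ≤ (inferInstance : MeasurableSpace Ω))
    (h_unconf : CondIndepFun (MeasurableSpace.comap X inferInstance) hle
      (fun ω => (Y0 ω, Y1 ω)) T μ)
    (h_pos : ∀ᵐ ω ∂μ, 0 < e ω ∧ e ω < 1)
    (hIntW : Integrable (fun ω => e ω / (1 - e ω) * |Y0 ω|) μ)
    (hInt : Integrable (fun ω => (T ω - (1 - T ω) * e ω / (1 - e ω)) * Y ω) μ) :
    ∫ ω, (Y1 ω - Y0 ω) ∂(ProbabilityTheory.cond μ (T ⁻¹' {1}))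
      = (μ (T ⁻¹' {1})).toReal⁻¹
        * ∫ ω, (T ω - (1 - T ω) * e ω / (1 - e ω)) * Y ω ∂μ := by
  classical
  set m := MeasurableSpace.comap X (inferInstance : MeasurableSpace α) with hm_def
  set s : Set Ω := T ⁻¹' {1} with hs_def
  set w : Ω → ℝ := fun ω => e ω / (1 - e ω) with hw_def
  set F : Ω → ℝ := fun ω => (1 - T ω) * Y0 ω with hF_def
  have hs := hT (measurableSet_singleton (1:ℝ))
  have hTbd : ∀ x, ‖T x‖ ≤ 1 := by intro x; rcases hT01 x with h | h <;> simp [h]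
  have h1Tbd : ∀ x, ‖1 - T x‖ ≤ 1 := by intro x; rcases hT01 x with h | h <;> simp [h]
  have hTY1 : Integrable (fun ω => T ω * Y1 ω) μ :=
    hY1.bdd_mul hT.aestronglyMeasurable (Filter.Eventually.of_forall hTbd)
  have hTY0 : Integrable (fun ω => T ω * Y0 ω) μ :=
    hY0.bdd_mul hT.aestronglyMeasurable (Filter.Eventually.of_forall hTbd)
  have hTint : Integrable T μ := by
    refine Integrable.mono' (integrable_const (1:ℝ)) hT.aestronglyMeasurable ?_
    exact Filter.Eventually.of_forall hTbd
  have hF : Integrable F μ :=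
    hY0.bdd_mul ((measurable_const.sub hT).aestronglyMeasurable) (Filter.Eventually.of_forall h1Tbd)
  have hesm : StronglyMeasurable[m] e := he ▸ stronglyMeasurable_condExp
  have hwsm : StronglyMeasurable[m] w := by
    refine Measurable.stronglyMeasurable ?_
    exact (hesm.measurable).div (measurable_const.sub hesm.measurable)
  have hwAE := (hwsm.mono hle).aestronglyMeasurable (μ := μ)
  have hwF : Integrable (fun ω => w ω * F ω) μ := by
    refine hIntW.mono (hwAE.mul hF.1) ?_
    filter_upwards [h_pos] with ω hpω
    obtain ⟨h0, h1⟩ := hpω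
    have hw0 : (0:ℝ) ≤ e ω / (1 - e ω) := div_nonneg h0.le (by linarith)
    have habs : |1 - T ω| ≤ 1 := by simpa [Real.norm_eq_abs] using h1Tbd ω
    have h2 : |1 - T ω| * |Y0 ω| ≤ |Y0 ω| :=
      mul_le_of_le_one_left (abs_nonneg _) habs
    simp only [hw_def, hF_def, Real.norm_eq_abs, abs_mul, abs_abs, abs_of_nonneg hw0]
    calc e ω / (1 - e ω) * (|1 - T ω| * |Y0 ω|)
        ≤ e ω / (1 - e ω) * |Y0 ω| := mul_le_mul_of_nonneg_left h2 hw0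
      _ = e ω / (1 - e ω) * |Y0 ω| := rfl
  have hcond0 : CondIndepFun m hle Y0 T μ := h_unconf.comp measurable_fst measurable_id
  have K1 : μ[fun ω => T ω * Y0 ω|m] =ᵐ[μ] fun ω => e ω * (μ[Y0|m]) ω := by
    refine (condexp_mul_of_condIndepFun (μ := μ) hle hT hY0 hTint hTY0 hcond0).trans ?_
    rw [he]
  have K2 : μ[F|m] =ᵐ[μ] fun ω => (1 - e ω) * (μ[Y0|m]) ω := by
    have hfun : F = Y0 - (fun ω => T ω * Y0 ω) := by funext ω; simp only [hF_def, Pi.sub_apply]; ring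
    rw [hfun]
    refine (condExp_sub hY0 hTY0 m).trans ?_
    filter_upwards [K1] with ω hω
    simp only [Pi.sub_apply, hω]
    ring
  have pull : μ[fun ω => w ω * F ω|m] =ᵐ[μ] fun ω => w ω * (μ[F|m]) ω :=
    condExp_mul_of_stronglyMeasurable_left hwsm hwF hF
  have hA : ∫ ω, T ω * Y0 ω ∂μ = ∫ ω, e ω * (μ[Y0|m]) ω ∂μ := by
    calc ∫ ω, T ω * Y0 ω ∂μ
        = ∫ ω, (μ[fun ω => T ω * Y0 ω|m]) ω ∂μ := (integral_condExp hle).symm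
      _ = ∫ ω, e ω * (μ[Y0|m]) ω ∂μ := integral_congr_ae K1
  have hB : ∫ ω, w ω * F ω ∂μ = ∫ ω, e ω * (μ[Y0|m]) ω ∂μ := by
    calc ∫ ω, w ω * F ω ∂μ
        = ∫ ω, (μ[fun ω => w ω * F ω|m]) ω ∂μ := (integral_condExp hle).symm
      _ = ∫ ω, w ω * (μ[F|m]) ω ∂μ := integral_congr_ae pull
      _ = ∫ ω, e ω * (μ[Y0|m]) ω ∂μ := by
          refine integral_congr_ae ?_
          filter_upwards [K2, h_pos] with ω hK2 hpω
          obtain ⟨h0, h1⟩ := hpω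
          rw [hK2]
          have hne : (1 : ℝ) - e ω ≠ 0 := by linarith
          simp only [hw_def]
          field_simp
  have key : ∫ ω, T ω * Y0 ω ∂μ = ∫ ω, w ω * F ω ∂μ := hA.trans hB.symm
  clear hA hB K1 K2 pull hcond0 h_unconf hwsm hesm he hle hm_def
  clear_value m
  clear m
  have hcond : ProbabilityTheory.cond μ s = (μ s)⁻¹ • μ.restrict s := rfl
  have hL : ∫ ω, (Y1 ω - Y0 ω) ∂(ProbabilityTheory.cond μ s)
      = (μ s).toReal⁻¹ * ∫ ω in s, (Y1 ω - Y0 ω) ∂μ := by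
    rw [hcond]
    simp only [integral_smul_measure]
    rw [ENNReal.toReal_inv, smul_eq_mul]
  have hres : ∫ ω in s, (Y1 ω - Y0 ω) ∂μ = ∫ ω, T ω * (Y1 ω - Y0 ω) ∂μ := by
    rw [← integral_indicator hs]
    congr 1
    funext ω
    rcases hT01 ω with h | h
    · have hns : ω ∉ s := by simp [hs_def, h]
      simp [Set.indicator_of_notMem hns, h]
    · have hmem : ω ∈ s := by simp [hs_def, h]
      simp [Set.indicator_of_mem hmem, h]
  have hsplitL : ∫ ω, T ω * (Y1 ω - Y0 ω) ∂μ
      = ∫ ω, T ω * Y1 ω ∂μ - ∫ ω, T ω * Y0 ω ∂μ := by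
    rw [← integral_sub hTY1 hTY0]
    congr 1; funext ω; ring
  have hsplitR : ∫ ω, (T ω - (1 - T ω) * e ω / (1 - e ω)) * Y ω ∂μ
      = ∫ ω, T ω * Y1 ω ∂μ - ∫ ω, w ω * F ω ∂μ := by
    rw [← integral_sub hTY1 hwF]
    congr 1; funext ω
    rcases hT01 ω with h | h <;> simp [hY, hw_def, hF_def, h] <;> ring
  rw [hL, hres, hsplitL, hsplitR, key]
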